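/- With the notation of the partial cofibrant dg resolution A_J of a graded quadratic monomial algebra A = kQ/⟨I⟩: the map d' defined on generators by d'([α]) = 0 for α ∈ Q_1 and d'([α_1⋯α_n]) = Σ_{i=1}^{n−1} (−1)^{|[α_1⋯α_i]|} [α_1⋯α_i][α_{i+1}⋯α_n], extended as a graded derivation, satisfies d'∘d' = 0, so A_J is a well-defined dg algebra. -/

import Mathlib

universe w

/-- A graded quiver with a set of quadratic monomial relations: the data `(Q, I)`
presenting a graded quadratic monomial algebra `A = kQ/⟨I⟩` (viewed as a dg algebra
with zero differential).  `rel a b` means that the length-two path `ab` lies in `I`;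
`deg` is the grading of the arrows. -/
structure QuadData : Type (w + 1) where
  V : Type w
  E : Type w
  src : E → V
  tgt : E → V
  deg : E → ℤ
  rel : E → E → Prop
  rel_comp : ∀ a b, rel a b → tgt a = src b

namespace QuadData

variable (Q : QuadData)

/-- A list of arrows is composable (i.e. is a path). -/
def Composable (l : List Q.E) : Prop := l.Chain' fun a b => Q.tgt a = Q.src b

/-- No two consecutive arrows of the path form a relation. -/
def AvoidsRel (l : List Q.E) : Prop := l.Chain' fun a b => ¬ Q.rel a b

/-- All consecutive pairs of arrows of the path are relations. -/
def AllRel (l : List Q.E) : Prop := l.Chain' fun a b => Q.rel a b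

end QuadData

namespace QuadData

variable (Q : QuadData)

variable (k : Type) [Field k]

/-- Formal words in the new arrows `[α₁ ⋯ αₙ]` of the partial resolution `A_J`:
a word is a list of "chunks", each chunk being (the list of letters of) one new
arrow. -/
abbrev Word := List (List Q.E)

/-- The basis labels of `A_J`: trivial paths at vertices, and words. -/
abbrev WBasis := Q.V ⊕ Q.Word

/-- The underlying `k`-module of `A_J`, as a free module on basis labels. -/
abbrev WMod := Q.WBasis →₀ k

/-- Degree of a new arrow `[α₁ ⋯ αₙ]`: `Σ |αᵢ| - n + 1`. -/
def cdeg (c : List Q.E) : ℤ := (c.map Q.deg).sum - c.length + 1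

/-- The differential `d'` applied to a basis word, defined on generators by
`d'([α₁ ⋯ αₙ]) = Σᵢ (-1) ^ |[α₁ ⋯ αᵢ]| [α₁ ⋯ αᵢ][αᵢ₊₁ ⋯ αₙ]` and extended to words
(products of generators) by the graded Leibniz rule. -/
noncomputable def dWord (w : Q.Word) : Q.WMod k :=
  ∑ j ∈ Finset.range w.length, ∑ i ∈ Finset.Ioo 0 (w.getD j []).length,
    ((-1 : k) ^ (((w.take j).map Q.cdeg).sum + Q.cdeg ((w.getD j []).take i))) •
      Finsupp.single
        (Sum.inr (w.take j ++ [(w.getD j []).take i, (w.getD j []).drop i] ++ w.drop (j + 1)))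
        1

/-- The differential `d'` of `A_J` as a `k`-linear endomorphism. -/
noncomputable def Dmap : Q.WMod k →ₗ[k] Q.WMod k :=
  Finsupp.lift (Q.WMod k) k (Q.WBasis)
    (fun b => Sum.rec (fun _ => 0) (fun w => Q.dWord k w) b)

variable {k}
variable (J : Q.E → Q.E → Prop)

/-- A chunk is a genuine new arrow of `A_J`: a nonempty path all of whose consecutive
pairs lie in `J`. -/
def ChunkOK (c : List Q.E) : Prop := c ≠ [] ∧ c.Chain' J

/-- Composability at the junction of two chunks. -/
def JComposable (c c' : List Q.E) : Prop :=
  ∀ a ∈ c.getLast?, ∀ b ∈ c'.head?, Q.tgt a = Q.src b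

/-- The junction of two chunks is not a relation of `I' = I ∖ J`. -/
def JNotRel (c c' : List Q.E) : Prop :=
  ∀ a ∈ c.getLast?, ∀ b ∈ c'.head?, ¬ (Q.rel a b ∧ ¬ J a b)

/-- A word is a basis element of `A_J`: a nonempty composable sequence of genuine
new arrows, avoiding the relations `I' = I ∖ J`. -/
def WordOK (w : Q.Word) : Prop :=
  w ≠ [] ∧ (∀ c ∈ w, Q.ChunkOK J c) ∧
    w.Chain' fun c c' => Q.JComposable c c' ∧ Q.JNotRel J c c'

def BasisOK : Q.WBasis → Prop := Sum.rec (fun _ => True) (Q.WordOK J)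

variable (k)

/-- The underlying `k`-module of `A_J`: the span of the genuine basis elements. -/
noncomputable def WSub : Submodule k (Q.WMod k) :=
  Submodule.span k {x | ∃ b, Q.BasisOK J b ∧ x = Finsupp.single b 1}

/-- Basis labels of `A = kQ/⟨I⟩`: trivial paths and paths of arrows. -/
abbrev ABasis := Q.V ⊕ List Q.E

abbrev AMod := Q.ABasis →₀ k

variable {k}

def APathOK : Q.ABasis → Prop :=
  Sum.rec (fun _ => True) (fun l => l ≠ [] ∧ Q.Composable l ∧ Q.AvoidsRel l)

variable (k)

/-- The underlying `k`-module of `A`: the span of the relation-avoiding paths. -/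
noncomputable def ASub : Submodule k (Q.AMod k) :=
  Submodule.span k {x | ∃ b, Q.APathOK b ∧ x = Finsupp.single b 1}

open scoped Classical in
/-- The canonical map `φ : A_J → A` on basis elements: a vertex goes to the
corresponding trivial path, a word all of whose chunks are single arrows goes to the
corresponding path of `A` (which is zero in `A` if it passes through a relation),
and any word containing a longer chunk `[α₁ ⋯ αₙ]`, `n ≥ 2`, goes to `0`. -/
noncomputable def phiFun : Q.WBasis → Q.AMod k
  | .inl v => Finsupp.single (Sum.inl v) 1
  | .inr w =>
      @ite _ ((∀ c ∈ w, c.length = 1) ∧ w ≠ [] ∧ Q.Composable w.flatten ∧ Q.AvoidsRel w.flatten)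
        (Classical.propDecidable _) (Finsupp.single (Sum.inr w.flatten) 1) 0

noncomputable def phi : Q.WMod k →ₗ[k] Q.AMod k :=
  Finsupp.lift (Q.AMod k) k (Q.WBasis) (Q.phiFun k)

def wordSrc (w : Q.Word) : Option Q.V := do
  let c ← w.head?
  let a ← c.head?
  pure (Q.src a)

def wordTgt (w : Q.Word) : Option Q.V := do
  let c ← w.getLast?
  let a ← c.getLast?
  pure (Q.tgt a)

open scoped Classical in
/-- Multiplication of `A_J` on basis elements. -/
noncomputable def wmulFun : Q.WBasis → Q.WBasis → Q.WMod k
  | .inl v, .inl w => if v = w then Finsupp.single (Sum.inl v) (1 : k) else 0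
  | .inl v, .inr w => if Q.wordSrc w = some v then Finsupp.single (Sum.inr w) (1 : k) else 0
  | .inr w, .inl v => if Q.wordTgt w = some v then Finsupp.single (Sum.inr w) (1 : k) else 0
  | .inr w, .inr w' =>
      if w ≠ [] ∧ w' ≠ [] ∧ Q.JComposable (w.getLast?.getD []) (w'.head?.getD []) ∧
          Q.JNotRel J (w.getLast?.getD []) (w'.head?.getD [])
      then Finsupp.single (Sum.inr (w ++ w')) (1 : k) else 0

noncomputable def wmul : Q.WMod k →ₗ[k] Q.WMod k →ₗ[k] Q.WMod k :=
  Finsupp.lift (Q.WMod k →ₗ[k] Q.WMod k) k (Q.WBasis)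
    (fun b => Finsupp.lift (Q.WMod k) k (Q.WBasis) (fun b' => Q.wmulFun k J b b'))

open scoped Classical in
/-- Multiplication of `A = kQ/⟨I⟩` on basis elements. -/
noncomputable def amulFun : Q.ABasis → Q.ABasis → Q.AMod k
  | .inl v, .inl w => if v = w then Finsupp.single (Sum.inl v) (1 : k) else 0
  | .inl v, .inr l => if l.head?.map Q.src = some v then Finsupp.single (Sum.inr l) (1 : k) else 0
  | .inr l, .inl v => if l.getLast?.map Q.tgt = some v then Finsupp.single (Sum.inr l) (1 : k) else 0
  | .inr l, .inr l' =>
      if l ≠ [] ∧ l' ≠ [] ∧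
          (∀ a ∈ l.getLast?, ∀ b ∈ l'.head?, Q.tgt a = Q.src b ∧ ¬ Q.rel a b)
      then Finsupp.single (Sum.inr (l ++ l')) (1 : k) else 0

noncomputable def amul : Q.AMod k →ₗ[k] Q.AMod k →ₗ[k] Q.AMod k :=
  Finsupp.lift (Q.AMod k →ₗ[k] Q.AMod k) k (Q.ABasis)
    (fun b => Finsupp.lift (Q.AMod k) k (Q.ABasis) (fun b' => Q.amulFun k b b'))

end QuadData

namespace QuadData

variable (Q : QuadData)

/-- Split the `j`-th chunk of a word at position `i`. -/
def spl (w : Q.Word) (j i : ℕ) : Q.Word :=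
  w.take j ++ [(w.getD j []).take i, (w.getD j []).drop i] ++ w.drop (j + 1)

def esum (w : Q.Word) (j : ℕ) : ℤ := ((w.take j).map Q.cdeg).sum

def eps (w : Q.Word) (j i : ℕ) : ℤ := Q.esum w j + Q.cdeg ((w.getD j []).take i)

lemma dWord_eq (k : Type) [Field k] (w : Q.Word) :
    Q.dWord k w = ∑ j ∈ Finset.range w.length, ∑ i ∈ Finset.Ioo 0 (w.getD j []).length,
      ((-1 : k) ^ (Q.eps w j i)) • Finsupp.single (Sum.inr (Q.spl w j i)) 1 := rfl

lemma spl_cons (d : List Q.E) (t : Q.Word) (j i : ℕ) :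
    Q.spl (d :: t) (j + 1) i = d :: Q.spl t j i := by
  simp [spl, List.take_succ_cons, List.getD_cons_succ, List.drop_succ_cons]

lemma spl_zero_cons (d : List Q.E) (t : Q.Word) (i : ℕ) :
    Q.spl (d :: t) 0 i = d.take i :: d.drop i :: t := by
  simp [spl]

lemma cdeg_append (a b : List Q.E) : Q.cdeg (a ++ b) = Q.cdeg a + Q.cdeg b - 1 := by
  simp only [cdeg, List.map_append, List.sum_append, List.length_append]
  push_cast; ring

lemma cdeg_take_drop (c : List Q.E) (i : ℕ) :
    Q.cdeg (c.take i) + Q.cdeg (c.drop i) = Q.cdeg c + 1 := by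
  have := Q.cdeg_append (c.take i) (c.drop i)
  rw [List.take_append_drop] at this; omega

lemma esum_zero (w : Q.Word) : Q.esum w 0 = 0 := by simp [esum]

lemma esum_cons (d : List Q.E) (t : Q.Word) (l : ℕ) :
    Q.esum (d :: t) (l + 1) = Q.cdeg d + Q.esum t l := by
  simp [esum, List.take_succ_cons]

lemma spl_length (w : Q.Word) (j i : ℕ) (h : j < w.length) :
    (Q.spl w j i).length = w.length + 1 := by
  simp only [spl, List.length_append, List.length_take, List.length_drop,
    List.length_cons, List.length_nil]
  omega

lemma getD_spl_lt (w : Q.Word) (j i l : ℕ) (hl : l < j) (h : j < w.length) :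
    (Q.spl w j i).getD l [] = w.getD l [] := by
  induction w generalizing j l with
  | nil => simp at h
  | cons d t ih =>
    match j, l with
    | j + 1, 0 => rw [spl_cons]; simp
    | j + 1, l + 1 =>
      rw [spl_cons, List.getD_cons_succ, List.getD_cons_succ]
      exact ih j l (by omega) (by simpa using h)

lemma getD_spl_self (w : Q.Word) (j i : ℕ) (h : j < w.length) :
    (Q.spl w j i).getD j [] = (w.getD j []).take i := by
  induction w generalizing j with
  | nil => simp at h
  | cons d t ih =>
    match j with
    | 0 => rw [spl_zero_cons]; rfl
    | j + 1 =>
      rw [spl_cons, List.getD_cons_succ, List.getD_cons_succ]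
      exact ih j (by simpa using h)

lemma getD_spl_succ (w : Q.Word) (j i : ℕ) (h : j < w.length) :
    (Q.spl w j i).getD (j + 1) [] = (w.getD j []).drop i := by
  induction w generalizing j with
  | nil => simp at h
  | cons d t ih =>
    match j with
    | 0 => rw [spl_zero_cons]; rfl
    | j + 1 =>
      rw [spl_cons, List.getD_cons_succ, List.getD_cons_succ]
      exact ih j (by simpa using h)

lemma getD_spl_ge (w : Q.Word) (j i m : ℕ) (hm : j < m) (h : j < w.length) :
    (Q.spl w j i).getD (m + 1) [] = w.getD m [] := by
  induction w generalizing j m with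
  | nil => simp at h
  | cons d t ih =>
    match j, m with
    | 0, m + 1 =>
      rw [spl_zero_cons]
      rfl
    | j + 1, m + 1 =>
      rw [spl_cons, List.getD_cons_succ, List.getD_cons_succ]
      exact ih j m (by omega) (by simpa using h)

lemma esum_spl_le (w : Q.Word) (j i l : ℕ) (hl : l ≤ j) (h : j < w.length) :
    Q.esum (Q.spl w j i) l = Q.esum w l := by
  induction w generalizing j l with
  | nil => simp at h
  | cons d t ih =>
    match j, l with
    | j, 0 => simp [esum_zero]
    | j + 1, l + 1 =>
      rw [spl_cons, esum_cons, esum_cons, ih j l (by omega) (by simpa using h)]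

lemma esum_spl_succ (w : Q.Word) (j i : ℕ) (h : j < w.length) :
    Q.esum (Q.spl w j i) (j + 1) = Q.esum w j + Q.cdeg ((w.getD j []).take i) := by
  induction w generalizing j with
  | nil => simp at h
  | cons d t ih =>
    match j with
    | 0 => rw [spl_zero_cons, esum_cons, esum_zero, esum_zero]; simp
    | j + 1 =>
      rw [spl_cons, esum_cons, esum_cons, ih j (by simpa using h), List.getD_cons_succ]
      ring

lemma esum_spl_ge (w : Q.Word) (j i m : ℕ) (hm : j < m) (h : j < w.length) :
    Q.esum (Q.spl w j i) (m + 1) = Q.esum w m + 1 := by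
  induction w generalizing j m with
  | nil => simp at h
  | cons d t ih =>
    match j, m with
    | 0, m + 1 =>
      rw [spl_zero_cons, esum_cons, esum_cons, esum_cons]
      have := Q.cdeg_take_drop d i
      have hd : (d :: t).getD 0 [] = d := rfl
      omega
    | j + 1, m + 1 =>
      rw [spl_cons, esum_cons, esum_cons, ih j m (by omega) (by simpa using h)]
      ring

end QuadData

namespace QuadData
variable (Q : QuadData)

lemma splitA (w : Q.Word) (j' j i i' : ℕ) (hlt : j' < j) (h : j < w.length) :
    Q.spl (Q.spl w j i) j' i' = Q.spl (Q.spl w j' i') (j + 1) i := by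
  induction w generalizing j' j with
  | nil => simp at h
  | cons d t ih =>
    match j', j with
    | 0, m + 1 =>
      simp only [spl_cons, spl_zero_cons]
    | s + 1, m + 1 =>
      simp only [spl_cons]
      rw [ih s m (by omega) (by simpa using h)]

lemma splitB (w : Q.Word) (j i i' : ℕ) (hle : i' ≤ i) (h : j < w.length) :
    Q.spl (Q.spl w j i) j i' = Q.spl (Q.spl w j i') (j + 1) (i - i') := by
  induction w generalizing j with
  | nil => simp at h
  | cons d t ih =>
    match j with
    | 0 =>
      simp only [spl_cons, spl_zero_cons]
      rw [List.take_take, List.drop_take, List.drop_drop, min_eq_left hle,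
        Nat.add_sub_cancel' hle]
    | m + 1 =>
      simp only [spl_cons]
      rw [ih m (by simpa using h)]

lemma splitC (w : Q.Word) (j i i' : ℕ) (h : j < w.length) :
    Q.spl (Q.spl w j i) (j + 1) i' = Q.spl (Q.spl w j (i + i')) j i := by
  induction w generalizing j with
  | nil => simp at h
  | cons d t ih =>
    match j with
    | 0 =>
      simp only [spl_cons, spl_zero_cons]
      rw [List.take_take, List.drop_take, List.drop_drop,
        min_eq_left (Nat.le_add_right i i'), Nat.add_sub_cancel_left]
    | m + 1 =>
      simp only [spl_cons]
      rw [ih m (by simpa using h)]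

lemma sgnA (w : Q.Word) (j' j i i' : ℕ) (hlt : j' < j) (h : j < w.length) :
    Q.eps w j' i' + Q.eps (Q.spl w j' i') (j + 1) i
      = Q.eps w j i + Q.eps (Q.spl w j i) j' i' + 1 := by
  have h' : j' < w.length := lt_trans hlt h
  simp only [eps]
  rw [Q.esum_spl_ge w j' i' j hlt h', Q.getD_spl_ge w j' i' j hlt h',
    Q.esum_spl_le w j i j' (by omega) h, Q.getD_spl_lt w j i j' (by omega) h]
  ring

lemma sgnB (w : Q.Word) (j i i' : ℕ) (hle : i' ≤ i) (h : j < w.length) :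
    Q.eps w j i' + Q.eps (Q.spl w j i') (j + 1) (i - i')
      = Q.eps w j i + Q.eps (Q.spl w j i) j i' + 1 := by
  simp only [eps]
  rw [Q.esum_spl_succ w j i' h, Q.getD_spl_succ w j i' h,
    Q.esum_spl_le w j i j (le_refl j) h, Q.getD_spl_self w j i h,
    List.take_take, min_eq_left hle]
  set c := w.getD j [] with hc
  have key : Q.cdeg (c.take i') + Q.cdeg ((c.drop i').take (i - i')) = Q.cdeg (c.take i) + 1 := by
    have h1 : c.take i = c.take i' ++ (c.drop i').take (i - i') := by
      rw [← List.take_add, Nat.add_sub_cancel' hle]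
    rw [h1, cdeg_append]; ring
  omega

lemma sgnC (w : Q.Word) (j i i' : ℕ) (h : j < w.length) :
    Q.eps w j i + Q.eps (Q.spl w j i) (j + 1) i'
      = Q.eps w j (i + i') + Q.eps (Q.spl w j (i + i')) j i + 1 := by
  simp only [eps]
  rw [Q.esum_spl_succ w j i h, Q.getD_spl_succ w j i h,
    Q.esum_spl_le w j (i + i') j (le_refl j) h, Q.getD_spl_self w j (i + i') h,
    List.take_take, min_eq_left (Nat.le_add_right i i')]
  set c := w.getD j [] with hc
  have key : Q.cdeg (c.take i) + Q.cdeg ((c.drop i).take i') = Q.cdeg (c.take (i + i')) + 1 := by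
    rw [List.take_add, cdeg_append]; ring
  omega

end QuadData

namespace QuadData
variable (Q : QuadData) (k : Type) [Field k]

lemma Dmap_single_inl (v : Q.V) : Q.Dmap k (Finsupp.single (Sum.inl v) (1 : k)) = 0 := by
  simp only [Dmap, Finsupp.lift_apply]
  rw [Finsupp.sum_single_index (by simp)]
  simp

lemma Dmap_single_inr (w : Q.Word) :
    Q.Dmap k (Finsupp.single (Sum.inr w) (1 : k)) = Q.dWord k w := by
  simp only [Dmap, Finsupp.lift_apply]
  rw [Finsupp.sum_single_index (by simp)]
  simp

lemma cancel_pair (x : Q.WMod k) (e : ℤ) :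
    ((-1 : k) ^ e) • x + ((-1 : k) ^ (e + 1)) • x = 0 := by
  rw [zpow_add₀ (by norm_num : (-1 : k) ≠ 0), zpow_one, ← add_smul]
  have h : (-1 : k) ^ e + (-1 : k) ^ e * (-1) = 0 := by ring
  rw [h, zero_smul]

def gg : ((_ : ℕ) × (_ : ℕ) × (_ : ℕ) × ℕ) → ((_ : ℕ) × (_ : ℕ) × (_ : ℕ) × ℕ)
  | ⟨j, i, j', i'⟩ =>
    if j' < j then ⟨j', i', j + 1, i⟩
    else if j' = j then ⟨j, i', j + 1, i - i'⟩
    else if j' = j + 1 then ⟨j, i + i', j, i⟩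
    else ⟨j' - 1, i', j, i⟩

lemma ggA (j i j' i' : ℕ) (h : j' < j) : gg ⟨j, i, j', i'⟩ = ⟨j', i', j + 1, i⟩ := by
  simp [gg, h]

lemma ggB (j i i' : ℕ) : gg ⟨j, i, j, i'⟩ = ⟨j, i', j + 1, i - i'⟩ := by
  simp [gg]

lemma ggC (j i i' : ℕ) : gg ⟨j, i, j + 1, i'⟩ = ⟨j, i + i', j, i⟩ := by
  simp [gg]

lemma ggD (j i j' i' : ℕ) (h : j + 1 < j') : gg ⟨j, i, j', i'⟩ = ⟨j' - 1, i', j, i⟩ := by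
  have h1 : ¬ (j' < j) := by omega
  have h2 : ¬ (j' = j) := by omega
  have h3 : ¬ (j' = j + 1) := by omega
  simp [gg, h1, h2, h3]

lemma dd (w : Q.Word) : Q.Dmap k (Q.dWord k w) = 0 := by
  rw [dWord_eq, map_sum]
  simp only [map_sum, map_smul, Dmap_single_inr, dWord_eq, Finset.smul_sum, smul_smul,
    ← zpow_add₀ (show (-1 : k) ≠ 0 by norm_num)]
  simp only [Finset.sum_sigma']
  refine Finset.sum_involution (fun a _ => gg a) ?_ ?_ ?_ ?_
  · -- pairwise cancellation
    rintro ⟨j, i, j', i'⟩ ha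
    simp only [Finset.mem_sigma, Finset.mem_range, Finset.mem_Ioo] at ha
    obtain ⟨hj, ⟨hi1, hi2⟩, hj', hi'1, hi'2⟩ := ha
    rw [Q.spl_length w j i hj] at hj'
    dsimp only
    rcases Nat.lt_trichotomy j' j with hA | rfl | hC
    · -- case A : j' < j
      rw [ggA j i j' i' hA]
      dsimp only
      rw [← Q.splitA w j' j i i' hA hj, Q.sgnA w j' j i i' hA hj]
      exact Q.cancel_pair k _ _
    · -- case B : j' = j
      have hii : i' < i := by
        rw [Q.getD_spl_self w j' i hj, List.length_take] at hi'2; omega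
      rw [ggB j' i i']
      dsimp only
      rw [← Q.splitB w j' i i' (le_of_lt hii) hj, Q.sgnB w j' i i' (le_of_lt hii) hj]
      exact Q.cancel_pair k _ _
    · rcases Nat.lt_or_ge j' (j + 2) with h1 | h2
      · -- case C : j' = j + 1
        obtain rfl : j' = j + 1 := by omega
        rw [ggC j i i']
        dsimp only
        rw [Q.splitC w j i i' hj, Q.sgnC w j i i' hj, add_comm]
        exact Q.cancel_pair k _ _
      · -- case D : j' > j + 1
        obtain ⟨m, rfl⟩ : ∃ m, j' = m + 1 + 1 := ⟨j' - 2, by omega⟩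
        rw [ggD j i (m + 1 + 1) i' (by omega)]
        dsimp only
        simp only [Nat.add_sub_cancel]
        rw [← Q.splitA w j (m + 1) i' i (by omega) (by omega),
          Q.sgnA w j (m + 1) i' i (by omega) (by omega), add_comm]
        exact Q.cancel_pair k _ _
  · -- no fixed points
    rintro ⟨j, i, j', i'⟩ ha _ h
    rcases Nat.lt_trichotomy j' j with hA | rfl | hC
    · rw [ggA j i j' i' hA] at h
      have := congrArg (fun x => x.2.2.1) h
      simp only at this; omega
    · rw [ggB j' i i'] at h
      have := congrArg (fun x => x.2.2.1) h
      simp only at this; omega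
    · rcases Nat.lt_or_ge j' (j + 2) with h1 | h2
      · obtain rfl : j' = j + 1 := by omega
        rw [ggC j i i'] at h
        have := congrArg (fun x => x.2.2.1) h
        simp only at this; omega
      · rw [ggD j i j' i' (by omega)] at h
        have := congrArg (fun x => x.2.2.1) h
        simp only at this; omega
  · -- image lands in the index set
    rintro ⟨j, i, j', i'⟩ ha
    simp only [Finset.mem_sigma, Finset.mem_range, Finset.mem_Ioo] at ha ⊢
    obtain ⟨hj, ⟨hi1, hi2⟩, hj', hi'1, hi'2⟩ := ha
    rw [Q.spl_length w j i hj] at hj'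
    try dsimp only
    rcases Nat.lt_trichotomy j' j with hA | rfl | hC
    · rw [ggA j i j' i' hA]
      try dsimp only
      rw [Q.getD_spl_lt w j i j' hA hj] at hi'2
      refine ⟨by omega, ⟨hi'1, hi'2⟩, ?_, hi1, ?_⟩
      · rw [Q.spl_length w j' i' (by omega)]; omega
      · rw [Q.getD_spl_ge w j' i' j hA (by omega)]; exact hi2
    · have hii : i' < i := by
        rw [Q.getD_spl_self w j' i hj, List.length_take] at hi'2; omega
      rw [ggB j' i i']
      try dsimp only
      refine ⟨hj, ⟨hi'1, by omega⟩, ?_, by omega, ?_⟩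
      · rw [Q.spl_length w j' i' hj]; omega
      · rw [Q.getD_spl_succ w j' i' hj, List.length_drop]; omega
    · rcases Nat.lt_or_ge j' (j + 2) with h1 | h2
      · obtain rfl : j' = j + 1 := by omega
        rw [Q.getD_spl_succ w j i hj, List.length_drop] at hi'2
        rw [ggC j i i']
        try dsimp only
        refine ⟨hj, ⟨by omega, by omega⟩, ?_, hi1, ?_⟩
        · rw [Q.spl_length w j (i + i') hj]; omega
        · rw [Q.getD_spl_self w j (i + i') hj, List.length_take]; omega
      · obtain ⟨m, rfl⟩ : ∃ m, j' = m + 1 + 1 := ⟨j' - 2, by omega⟩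
        have hm : m + 1 < w.length := by omega
        rw [Q.getD_spl_ge w j i (m + 1) (by omega) hj] at hi'2
        rw [ggD j i (m + 1 + 1) i' (by omega)]
        try dsimp only
        simp only [Nat.add_sub_cancel]
        refine ⟨hm, ⟨hi'1, hi'2⟩, ?_, hi1, ?_⟩
        · rw [Q.spl_length w (m + 1) i' hm]; omega
        · rw [Q.getD_spl_lt w (m + 1) i' j (by omega) hm]; exact hi2
  · -- involution
    rintro ⟨j, i, j', i'⟩ ha
    simp only [Finset.mem_sigma, Finset.mem_range, Finset.mem_Ioo] at ha
    obtain ⟨hj, ⟨hi1, hi2⟩, hj', hi'1, hi'2⟩ := ha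
    rcases Nat.lt_trichotomy j' j with hA | rfl | hC
    · rw [ggA j i j' i' hA, ggD j' i' (j + 1) i (by omega)]
      simp only [Nat.add_sub_cancel]
    · have hii : i' < i := by
        rw [Q.getD_spl_self w j' i hj, List.length_take] at hi'2; omega
      rw [ggB j' i i', ggC j' i' (i - i')]
      have h : i' + (i - i') = i := by omega
      rw [h]
    · rcases Nat.lt_or_ge j' (j + 2) with h1 | h2
      · obtain rfl : j' = j + 1 := by omega
        rw [ggC j i i', ggB j (i + i') i]
        have h : i + i' - i = i' := by omega
        rw [h]
      · obtain ⟨m, rfl⟩ : ∃ m, j' = m + 1 + 1 := ⟨j' - 2, by omega⟩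
        rw [ggD j i (m + 1 + 1) i' (by omega)]
        simp only [Nat.add_sub_cancel]
        rw [ggA (m + 1) i' j i (by omega)]

end QuadData

namespace QuadData
variable (Q : QuadData)

lemma head?_take' (c : List Q.E) (i : ℕ) (h : 0 < i) : (c.take i).head? = c.head? := by
  rw [List.head?_take, if_neg (by omega)]

lemma getLast?_drop' (c : List Q.E) (i : ℕ) (h : i < c.length) :
    (c.drop i).getLast? = c.getLast? := by
  rw [List.getLast?_drop, if_neg (by omega)]

lemma junction (J : Q.E → Q.E → Prop) (cl : List Q.E) (i : ℕ) (hc : cl.Chain' J)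
    (h1 : 0 < i) (h2 : i < cl.length) :
    ∀ a ∈ (cl.take i).getLast?, ∀ b ∈ (cl.drop i).head?, J a b := by
  obtain ⟨m, rfl⟩ : ∃ m, i = m + 1 := ⟨i - 1, by omega⟩
  have hlt : m < cl.length := by omega
  have hlt' : m + 1 < cl.length := h2
  have htake : (cl.take (m + 1)).getLast? = cl[m]? := by
    rw [List.getLast?_eq_getElem?, List.length_take]
    have hmin : min (m + 1) cl.length = m + 1 := by omega
    rw [hmin]
    simp only [Nat.add_sub_cancel, List.getElem?_take, if_pos (Nat.lt_succ_self m)]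
  have hdrop : (cl.drop (m + 1)).head? = cl[m + 1]? := List.head?_drop
  intro a ha b hb
  rw [htake, List.getElem?_eq_getElem hlt, Option.mem_some_iff] at ha
  rw [hdrop, List.getElem?_eq_getElem hlt', Option.mem_some_iff] at hb
  subst ha; subst hb
  have := List.isChain_iff_getElem.mp hc m (by omega)
  simpa [List.get_eq_getElem] using this

lemma WordOK_spl (J : Q.E → Q.E → Prop) (hJ : ∀ a b, J a b → Q.rel a b)
    (w : Q.Word) (j i : ℕ) (hw : Q.WordOK J w) (hj : j < w.length)
    (hi1 : 0 < i) (hi2 : i < (w.getD j []).length) :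
    Q.WordOK J (Q.spl w j i) := by
  obtain ⟨hne, hch, hchain⟩ := hw
  obtain ⟨c, hc⟩ : ∃ c, w.getD j [] = c := ⟨_, rfl⟩
  rw [hc] at hi2
  have hcmem : c ∈ w := by
    rw [← hc, List.getD_eq_getElem w [] hj]; exact List.getElem_mem hj
  have hcok : Q.ChunkOK J c := hch c hcmem
  have hcne : c ≠ [] := hcok.1
  have hcJ : c.Chain' J := hcok.2
  -- the two new chunks are fine
  have htne : c.take i ≠ [] := by
    rw [Ne, List.take_eq_nil_iff]
    push_neg
    exact ⟨by omega, hcne⟩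
  have htakeok : Q.ChunkOK J (c.take i) := ⟨htne, hcJ.prefix (List.take_prefix i c)⟩
  have hdropok : Q.ChunkOK J (c.drop i) :=
    ⟨by rw [Ne, List.drop_eq_nil_iff]; omega, hcJ.suffix (List.drop_suffix i c)⟩
  -- the junction satisfies J
  have hjunc := Q.junction J c i hcJ hi1 hi2
  have hPmid : Q.JComposable (c.take i) (c.drop i) ∧ Q.JNotRel J (c.take i) (c.drop i) := by
    constructor
    · intro a ha b hb
      exact Q.rel_comp a b (hJ a b (hjunc a ha b hb))
    · intro a ha b hb hcon
      exact hcon.2 (hjunc a ha b hb)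
  -- decomposition of w
  have hdec : w = w.take j ++ c :: w.drop (j + 1) := by
    conv_lhs => rw [← List.take_append_drop j w]
    rw [List.drop_eq_getElem_cons hj, ← hc, List.getD_eq_getElem w [] hj]
  have hspl : Q.spl w j i = w.take j ++ c.take i :: c.drop i :: w.drop (j + 1) := by
    simp only [spl, hc]
    simp
  refine ⟨by simp [hspl], ?_, ?_⟩
  · -- all chunks OK
    intro ch hmem
    rw [hspl] at hmem
    simp only [List.mem_append, List.mem_cons] at hmem
    rcases hmem with h | h | h | h
    · exact hch ch (List.mem_of_mem_take h)
    · rw [h]; exact htakeok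
    · rw [h]; exact hdropok
    · exact hch ch (List.mem_of_mem_drop h)
  · -- the chain condition
    rw [hdec] at hchain
    rw [hspl]
    unfold List.Chain' at hchain ⊢
    rw [List.isChain_append] at hchain ⊢
    obtain ⟨h1, h2, h3⟩ := hchain
    rw [List.isChain_cons] at h2
    obtain ⟨hnext, hrest⟩ := h2
    refine ⟨h1, ?_, ?_⟩
    · rw [List.isChain_cons_cons, List.isChain_cons]
      refine ⟨hPmid, ?_, hrest⟩
      intro y hy
      have hcy := hnext y hy
      constructor
      · intro a ha b hb
        rw [Q.getLast?_drop' c i hi2] at ha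
        exact hcy.1 a ha b hb
      · intro a ha b hb
        rw [Q.getLast?_drop' c i hi2] at ha
        exact hcy.2 a ha b hb
    · intro x hx y hy
      simp only [List.head?_cons, Option.mem_some_iff] at hy
      subst hy
      have hPxc := h3 x hx c (by simp)
      constructor
      · intro a ha b hb
        rw [Q.head?_take' c i hi1] at hb
        exact hPxc.1 a ha b hb
      · intro a ha b hb
        rw [Q.head?_take' c i hi1] at hb
        exact hPxc.2 a ha b hb

end QuadData

/-- The map `d'`, defined on generators by `d'([α]) = 0` and
`d'([α₁ ⋯ αₙ]) = Σᵢ (-1) ^ |[α₁ ⋯ αᵢ]| [α₁ ⋯ αᵢ][αᵢ₊₁ ⋯ αₙ]` and extended as a graded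
derivation, satisfies `d' ∘ d' = 0` on `A_J`, so `A_J` is a well-defined dg
algebra. -/
theorem partial_resolution_d_squared_zero (k : Type) [Field k] (Q : QuadData)
    (J : Q.E → Q.E → Prop) (hJ : ∀ a b, J a b → Q.rel a b) :
    (∀ x ∈ Q.WSub k J, Q.Dmap k x ∈ Q.WSub k J) ∧
    (∀ x ∈ Q.WSub k J, Q.Dmap k (Q.Dmap k x) = 0) := by
  constructor
  · -- the differential preserves the submodule
    intro x hx
    refine Submodule.span_induction ?_ ?_ ?_ ?_ hx
    · rintro x ⟨b, hb, rfl⟩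
      cases b with
      | inl v => rw [Q.Dmap_single_inl]; exact zero_mem _
      | inr w =>
        rw [Q.Dmap_single_inr, Q.dWord_eq]
        refine Submodule.sum_mem _ fun j hj => Submodule.sum_mem _ fun i hi => ?_
        rw [Finset.mem_range] at hj
        rw [Finset.mem_Ioo] at hi
        refine Submodule.smul_mem _ _ (Submodule.subset_span ?_)
        exact ⟨Sum.inr (Q.spl w j i), Q.WordOK_spl J hJ w j i hb hj hi.1 hi.2, rfl⟩
    · rw [map_zero]; exact zero_mem _
    · intro x y _ _ hx hy; rw [map_add]; exact add_mem hx hy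
    · intro a x _ hx; rw [map_smul]; exact Submodule.smul_mem _ _ hx
  · -- d ∘ d = 0 (in fact on the whole module)
    intro x _
    have key : (Q.Dmap k).comp (Q.Dmap k) = 0 := by
      apply Finsupp.lhom_ext
      intro a b
      rw [← Finsupp.smul_single_one a b]
      rw [LinearMap.comp_apply, map_smul, map_smul, LinearMap.zero_apply]
      cases a with
      | inl v => rw [Q.Dmap_single_inl, map_zero, smul_zero]
      | inr w => rw [Q.Dmap_single_inr, Q.dd, smul_zero]
    have := LinearMap.congr_fun key x
    rw [LinearMap.comp_apply, LinearMap.zero_apply] at this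
    exact this
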